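/- Let H_B be a real skew-symmetric b×b matrix, H_I a real b×a matrix, and v ∈ ℂ^a. Define f_v(s) := v† H_Iᵀ exp(−H_B s) H_I v. Then f_v is a function of positive type: for every finite collection of real numbers s_1, …, s_N and complex numbers c_1, …, c_N, the sum Σ_{n,m} conj(c_n) · c_m · f_v(s_n − s_m) is real and nonnegative; indeed it equals ⟨w, w⟩ where w = Σ_m c_m · exp(H_B s_m) H_I v. -/

import Mathlib

open Matrix NormedSpace

private lemma key_mat {a b : ℕ}
    (HB : Matrix (Fin b) (Fin b) ℝ) (hHB : HBᵀ = -HB)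
    (HI : Matrix (Fin b) (Fin a) ℝ) (t u : ℝ) :
    HIᵀ * NormedSpace.exp (-((t - u) • HB)) * HI
      = (NormedSpace.exp (t • HB) * HI)ᵀ * (NormedSpace.exp (u • HB) * HI) := by
  have h1 : -((t - u) • HB) = (-(t • HB)) + u • HB := by
    rw [sub_smul]; abel
  have hc : Commute (-(t • HB)) (u • HB) := by
    apply Commute.neg_left
    exact (Commute.refl HB).smul_left t |>.smul_right u
  have h2 : NormedSpace.exp (-(t • HB)) = (NormedSpace.exp (t • HB))ᵀ := by
    rw [← Matrix.exp_transpose]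
    congr 1
    rw [transpose_smul, hHB, smul_neg]
  rw [h1, Matrix.exp_add_of_commute _ _ hc, h2, transpose_mul]
  simp [Matrix.mul_assoc]

private lemma key_dot {a b : ℕ} (P Q : Matrix (Fin b) (Fin a) ℝ) (v : Fin a → ℂ) :
    star v ⬝ᵥ ((Pᵀ * Q).map Complex.ofReal).mulVec v
      = star ((P.map Complex.ofReal).mulVec v) ⬝ᵥ ((Q.map Complex.ofReal).mulVec v) := by
  have hmap : (Pᵀ * Q).map Complex.ofReal
      = (P.map Complex.ofReal)ᵀ * (Q.map Complex.ofReal) := by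
    rw [← transpose_map]
    exact Matrix.map_mul (f := Complex.ofRealHom)
  have hstar : star ((P.map Complex.ofReal).mulVec v)
      = (P.map Complex.ofReal).mulVec (star v) := by
    funext i
    simp [Matrix.mulVec, dotProduct, map_sum, Complex.conj_ofReal]
  rw [hmap, ← Matrix.mulVec_mulVec, Matrix.dotProduct_mulVec, hstar,
    Matrix.vecMul_transpose]

/-- The bath correlation function `f_v(s) = v† H_Iᵀ exp(−H_B s) H_I v`
is of positive type: for any reals `s_1, …, s_N` and complex `c_1, …, c_N`, the sum
`Σ_{n,m} conj(c_n) c_m f_v(s_n − s_m)` equals `⟨w, w⟩` with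
`w = Σ_m c_m exp(H_B s_m) H_I v`, hence is real and nonnegative. -/
theorem bath_correlation_positive_type {a b : ℕ}
    (HB : Matrix (Fin b) (Fin b) ℝ) (hHB : HBᵀ = -HB)
    (HI : Matrix (Fin b) (Fin a) ℝ) (v : Fin a → ℂ)
    (N : ℕ) (s : Fin N → ℝ) (c : Fin N → ℂ) :
    (∑ n, ∑ m, starRingEnd ℂ (c n) * c m *
        (star v ⬝ᵥ ((HIᵀ * NormedSpace.exp (-((s n - s m) • HB)) * HI).map Complex.ofReal).mulVec v))
      = star (∑ m, c m • ((NormedSpace.exp (s m • HB) * HI).map Complex.ofReal).mulVec v) ⬝ᵥ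
          (∑ m, c m • ((NormedSpace.exp (s m • HB) * HI).map Complex.ofReal).mulVec v) ∧
    0 ≤ (∑ n, ∑ m, starRingEnd ℂ (c n) * c m *
        (star v ⬝ᵥ ((HIᵀ * NormedSpace.exp (-((s n - s m) • HB)) * HI).map Complex.ofReal).mulVec v)).re ∧
    (∑ n, ∑ m, starRingEnd ℂ (c n) * c m *
        (star v ⬝ᵥ ((HIᵀ * NormedSpace.exp (-((s n - s m) • HB)) * HI).map Complex.ofReal).mulVec v)).im
      = 0 := by
  set w : Fin N → Fin b → ℂ :=
    fun m => ((NormedSpace.exp (s m • HB) * HI).map Complex.ofReal).mulVec v with hw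
  have hterm : ∀ n m, starRingEnd ℂ (c n) * c m *
      (star v ⬝ᵥ ((HIᵀ * NormedSpace.exp (-((s n - s m) • HB)) * HI).map Complex.ofReal).mulVec v)
      = star (c n • w n) ⬝ᵥ (c m • w m) := by
    intro n m
    rw [key_mat HB hHB HI (s n) (s m), key_dot]
    simp only [star_smul, smul_dotProduct, dotProduct_smul, smul_eq_mul, hw]
    push_cast [starRingEnd_apply]
    ring
  have hsum1 : ∀ (f : Fin N → Fin b → ℂ) (y : Fin b → ℂ),
      (∑ n, f n) ⬝ᵥ y = ∑ n, f n ⬝ᵥ y := by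
    intro f y
    simp only [dotProduct, Finset.sum_apply, Finset.sum_mul]
    exact Finset.sum_comm
  have hsum2 : ∀ (y : Fin b → ℂ) (f : Fin N → Fin b → ℂ),
      y ⬝ᵥ (∑ n, f n) = ∑ n, y ⬝ᵥ f n := by
    intro y f
    simp only [dotProduct, Finset.sum_apply, Finset.mul_sum]
    exact Finset.sum_comm
  have hmain : (∑ n, ∑ m, starRingEnd ℂ (c n) * c m *
      (star v ⬝ᵥ ((HIᵀ * NormedSpace.exp (-((s n - s m) • HB)) * HI).map Complex.ofReal).mulVec v))
      = star (∑ m, c m • w m) ⬝ᵥ (∑ m, c m • w m) := by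
    rw [star_sum, hsum1]
    refine Finset.sum_congr rfl fun n _ => ?_
    rw [hsum2]
    exact Finset.sum_congr rfl fun m _ => hterm n m
  have hreal : ∀ y : Fin b → ℂ,
      star y ⬝ᵥ y = ((∑ i, Complex.normSq (y i) : ℝ) : ℂ) := by
    intro y
    rw [dotProduct]
    push_cast
    refine Finset.sum_congr rfl fun i _ => ?_
    rw [Pi.star_apply, RCLike.star_def, mul_comm, Complex.mul_conj]
  refine ⟨hmain, ?_, ?_⟩
  · rw [hmain, hreal, Complex.ofReal_re]
    exact Finset.sum_nonneg fun i _ => Complex.normSq_nonneg _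
  · rw [hmain, hreal, Complex.ofReal_im]
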